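/- With P₁, …, P_ν the stable plateaux, Γᵢ = Φ(Pᵢ, ∪_{j≠i} Pⱼ) − H(Pᵢ), and Vᵢ = {η : Φ(Pᵢ, η) − H(Pᵢ) < Γᵢ}, each Vᵢ is a cycle: it is nonempty, connected, and max_{Vᵢ} H < min_{∂Vᵢ} H. -/

import Mathlib

open SimpleGraph

variable {Ω : Type*}

/-- The height of a walk: the maximum of the energy `H` along its support. -/
noncomputable def walkHeight (H : Ω → ℝ) {G : SimpleGraph Ω} {a b : Ω} (w : G.Walk a b) : ℝ :=
  (w.support.map H).foldr max (H b)

/-- The communication height between two vertices: minimal height over all paths. -/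
noncomputable def commHeight (G : SimpleGraph Ω) (H : Ω → ℝ) (a b : Ω) : ℝ :=
  sInf {h : ℝ | ∃ w : G.Walk a b, walkHeight H w = h}

/-- Outer boundary of a set of vertices. -/
def outerBoundary (G : SimpleGraph Ω) (A : Set Ω) : Set Ω :=
  {ξ | ξ ∉ A ∧ ∃ η ∈ A, G.Adj ξ η}

/-- A (nontrivial) cycle: nonempty, connected, proper, with `max_C H < min_{∂C} H`. -/
def IsCycleSet (G : SimpleGraph Ω) (H : Ω → ℝ) (C : Set Ω) : Prop :=
  C.Nonempty ∧ (G.induce C).Connected ∧ C ≠ Set.univ ∧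
    ∀ η ∈ C, ∀ ξ ∈ outerBoundary G C, H η < H ξ

/-- A stable plateau: nonempty, connected, constant energy, strictly higher on the boundary. -/
def IsStablePlateau (G : SimpleGraph Ω) (H : Ω → ℝ) (P : Set Ω) : Prop :=
  P.Nonempty ∧ (G.induce P).Connected ∧ (∀ x ∈ P, ∀ y ∈ P, H x = H y) ∧
    ∀ x ∈ P, ∀ ζ ∈ outerBoundary G P, H x < H ζ

/-- Communication height between two sets. -/
noncomputable def commHeightSet (G : SimpleGraph Ω) (H : Ω → ℝ) (A B : Set Ω) : ℝ :=
  sInf {h : ℝ | ∃ a ∈ A, ∃ b ∈ B, commHeight G H a b = h}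

/-- The bottom of a set: the minimizers of `H` on it. -/
def bottom (H : Ω → ℝ) (C : Set Ω) : Set Ω := {x ∈ C | ∀ y ∈ C, H x ≤ H y}

/-- `A` is a connected component of `S`: a maximal nonempty connected subset of `S`. -/
def IsConnectedComponentOf (G : SimpleGraph Ω) (S A : Set Ω) : Prop :=
  A ⊆ S ∧ A.Nonempty ∧ (G.induce A).Connected ∧
    ∀ B : Set Ω, A ⊆ B → B ⊆ S → (G.induce B).Connected → B = A

namespace Valley

set_option linter.unusedSectionVars false

lemma foldr_max_le {l : List ℝ} {base c : ℝ} (hb : base ≤ c) (h : ∀ x ∈ l, x ≤ c) :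
    l.foldr max base ≤ c := by
  induction l with
  | nil => simpa
  | cons x t ih =>
      simp only [List.foldr_cons, max_le_iff]
      exact ⟨h x (by simp), ih (fun y hy => h y (by simp [hy]))⟩

lemma le_foldr_max {l : List ℝ} {base x : ℝ} (hx : x ∈ l) : x ≤ l.foldr max base := by
  induction l with
  | nil => simp at hx
  | cons y t ih =>
      rcases List.mem_cons.mp hx with rfl | hx
      · exact le_max_left _ _
      · exact le_trans (ih hx) (le_max_right _ _)

lemma foldr_max_mem {l : List ℝ} {base : ℝ} : l.foldr max base ∈ base ::ₘ (l : Multiset ℝ) := by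
  induction l with
  | nil => simp
  | cons x t ih =>
      simp only [List.foldr_cons]
      rcases max_choice x (t.foldr max base) with h | h <;> rw [h]
      · simp
      · rcases Multiset.mem_cons.mp ih with h' | h'
        · simp [h']
        · have ht : t.foldr max base ∈ t := by simpa using h'
          simp [ht]

variable {G : SimpleGraph Ω} {H : Ω → ℝ}

lemma le_walkHeight {a b : Ω} (w : G.Walk a b) {x : Ω} (hx : x ∈ w.support) :
    H x ≤ walkHeight H w :=
  le_foldr_max (List.mem_map_of_mem (f := H) hx)

lemma walkHeight_le {a b : Ω} (w : G.Walk a b) {c : ℝ} (h : ∀ x ∈ w.support, H x ≤ c) :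
    walkHeight H w ≤ c :=
  foldr_max_le (h b w.end_mem_support)
    (by rintro x hx; rcases List.mem_map.mp hx with ⟨y, hy, rfl⟩; exact h y hy)

lemma walkHeight_mem_range {a b : Ω} (w : G.Walk a b) : walkHeight H w ∈ Set.range H := by
  have := foldr_max_mem (l := w.support.map H) (base := H b)
  rcases Multiset.mem_cons.mp this with h | h
  · exact ⟨b, h.symm⟩
  · rcases List.mem_map.mp (by simpa using h) with ⟨y, _, hy⟩
    exact ⟨y, hy⟩

/-- A walk from inside A to outside A hits the outer boundary. -/
lemma exists_boundary_mem {A : Set Ω} :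
    ∀ {a b : Ω} (w : G.Walk a b), a ∈ A → b ∉ A →
      ∃ ξ ∈ w.support, ξ ∈ outerBoundary G A := by
  intro a b w
  induction w with
  | nil => intro ha hb; exact absurd ha hb
  | @cons u v c h w ih =>
      intro ha hb
      by_cases hv : v ∈ A
      · obtain ⟨ξ, hξs, hξb⟩ := ih hv hb
        exact ⟨ξ, by simp [hξs], hξb⟩
      · exact ⟨v, by simp, hv, u, ha, h.symm⟩

/-- A walk in the induced graph gives a walk in G with support inside the set. -/
lemma walk_of_induce {S : Set Ω} :
    ∀ {x y : S} (_ : (G.induce S).Walk x y),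
      ∃ w : G.Walk x y, ∀ z ∈ w.support, z ∈ S := by
  intro x y w
  induction w with
  | nil => exact ⟨Walk.nil, by rintro z hz; simp at hz; subst hz; exact Subtype.coe_prop _⟩
  | @cons u v c h w ih =>
      obtain ⟨w', hw'⟩ := ih
      exact ⟨Walk.cons h w', by
        rintro z hz
        rcases List.mem_cons.mp (show z ∈ (u : Ω) :: w'.support from hz) with rfl | hz
        · exact u.2
        · exact hw' z hz⟩

/-- A walk in G with support inside S gives reachability in the induced graph. -/
lemma reachable_induce {S : Set Ω} :
    ∀ {a b : Ω} (w : G.Walk a b) (hs : ∀ z ∈ w.support, z ∈ S),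
      (G.induce S).Reachable ⟨a, hs a w.start_mem_support⟩ ⟨b, hs b w.end_mem_support⟩ := by
  intro a b w
  induction w with
  | nil => intro hs; rfl
  | @cons u v c h w ih =>
      intro hs
      have hv : v ∈ S := hs v (by simp)
      have h1 : (G.induce S).Adj ⟨u, hs u (by simp)⟩ ⟨v, hv⟩ := h
      have h2 := ih (fun z hz => hs z (by simp [hz]))
      exact h1.reachable.trans h2

/-- Two stable plateaux that intersect are equal. -/
lemma plateau_eq_of_inter {P Q : Set Ω} (hP : IsStablePlateau G H P)
    (hQ : IsStablePlateau G H Q) (hx : (P ∩ Q).Nonempty) : P = Q := by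
  obtain ⟨x, hxP, hxQ⟩ := hx
  have key : ∀ {P Q : Set Ω}, IsStablePlateau G H P → IsStablePlateau G H Q →
      ∀ x, x ∈ P → x ∈ Q → P ⊆ Q := by
    intro P Q hP hQ x hxP hxQ y hyP
    obtain ⟨-, hPc, hPconst, -⟩ := hP
    obtain ⟨-, -, hQconst, hQbd⟩ := hQ
    obtain ⟨wi⟩ := hPc.preconnected ⟨x, hxP⟩ ⟨y, hyP⟩
    obtain ⟨w, hw⟩ := walk_of_induce wi
    suffices h : ∀ {a b : Ω} (w : G.Walk a b), a ∈ Q → (∀ z ∈ w.support, z ∈ P) → b ∈ Q by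
      exact h w hxQ hw
    intro a b w
    induction w with
    | nil => intro ha _; exact ha
    | @cons u v c h w ih =>
        intro ha hs
        have hvP : v ∈ P := hs v (by simp)
        have huP : u ∈ P := hs u (by simp)
        have hvQ : v ∈ Q := by
          by_contra hvQ
          have hbd : v ∈ outerBoundary G Q := ⟨hvQ, u, ha, h.symm⟩
          have h1 : H u < H v := hQbd u ha v hbd
          have h2 : H u = H v := hPconst u huP v hvP
          exact lt_irrefl _ (h2 ▸ h1)
        exact ih hvQ (fun z hz => hs z (by simp [hz]))
  exact Set.Subset.antisymm (key hP hQ x hxP hxQ) (key hQ hP x hxQ hxP)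

variable [Fintype Ω]

lemma walkSet_finite {a b : Ω} :
    ({h : ℝ | ∃ w : G.Walk a b, walkHeight H w = h}).Finite :=
  (Set.finite_range H).subset (by rintro h ⟨w, rfl⟩; exact walkHeight_mem_range w)

lemma commHeight_le {a b : Ω} (w : G.Walk a b) : commHeight G H a b ≤ walkHeight H w :=
  csInf_le walkSet_finite.bddBelow ⟨w, rfl⟩

lemma exists_walk_commHeight {a b : Ω} (h : G.Reachable a b) :
    ∃ w : G.Walk a b, walkHeight H w = commHeight G H a b := by
  have hne : {h : ℝ | ∃ w : G.Walk a b, walkHeight H w = h}.Nonempty :=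
    ⟨walkHeight H h.some, h.some, rfl⟩
  exact hne.csInf_mem walkSet_finite

lemma commHeight_mem_range {a b : Ω} (h : G.Reachable a b) :
    commHeight G H a b ∈ Set.range H := by
  obtain ⟨w, hw⟩ := exists_walk_commHeight (H := H) h
  exact hw ▸ walkHeight_mem_range w

lemma le_commHeight_left {a b : Ω} (h : G.Reachable a b) : H a ≤ commHeight G H a b := by
  obtain ⟨w, hw⟩ := exists_walk_commHeight (H := H) h
  exact hw ▸ le_walkHeight w w.start_mem_support

lemma le_commHeight_right {a b : Ω} (h : G.Reachable a b) : H b ≤ commHeight G H a b := by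
  obtain ⟨w, hw⟩ := exists_walk_commHeight (H := H) h
  exact hw ▸ le_walkHeight w w.end_mem_support

lemma commHeight_self (a : Ω) : commHeight G H a a = H a := by
  have h1 : commHeight G H a a ≤ H a := by
    have := commHeight_le (H := H) (Walk.nil : G.Walk a a)
    simpa [walkHeight] using this
  exact le_antisymm h1 (le_commHeight_left (Reachable.refl a))

lemma pairSet_subset (hG : G.Connected) {A B : Set Ω} :
    {h : ℝ | ∃ a ∈ A, ∃ b ∈ B, commHeight G H a b = h} ⊆ Set.range H := by
  rintro h ⟨a, _, b, _, rfl⟩; exact commHeight_mem_range (hG.preconnected a b)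

lemma commHeightSet_le (hG : G.Connected) {A B : Set Ω} {a b : Ω} (ha : a ∈ A) (hb : b ∈ B) :
    commHeightSet G H A B ≤ commHeight G H a b :=
  csInf_le (((Set.finite_range H).subset (pairSet_subset hG)).bddBelow) ⟨a, ha, b, hb, rfl⟩

lemma exists_commHeightSet (hG : G.Connected) {A B : Set Ω} (hA : A.Nonempty) (hB : B.Nonempty) :
    ∃ a ∈ A, ∃ b ∈ B, commHeight G H a b = commHeightSet G H A B := by
  obtain ⟨a, ha⟩ := hA; obtain ⟨b, hb⟩ := hB
  have hne : {h : ℝ | ∃ a ∈ A, ∃ b ∈ B, commHeight G H a b = h}.Nonempty :=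
    ⟨_, a, ha, b, hb, rfl⟩
  exact hne.csInf_mem ((Set.finite_range H).subset (pairSet_subset hG))

end Valley

open Valley

/-- each valley `Vᵢ` is a cycle. -/
theorem valleys_are_cycles [Fintype Ω] (G : SimpleGraph Ω) (hG : G.Connected) (H : Ω → ℝ)
    (ν : ℕ) (hν : 2 ≤ ν) (P : Fin ν → Set Ω)
    (hP : ∀ i, IsStablePlateau G H (P i))
    (hPinj : Function.Injective P)
    (hPall : ∀ Q : Set Ω, IsStablePlateau G H Q → ∃ i, Q = P i)
    (p : Fin ν → Ω) (hp : ∀ i, p i ∈ P i)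
    (Γ : Fin ν → ℝ)
    (hΓ : ∀ i, Γ i = commHeightSet G H (P i) {x | ∃ j, j ≠ i ∧ x ∈ P j} - H (p i))
    (V : Fin ν → Set Ω)
    (hV : ∀ i, V i = {η | commHeightSet G H (P i) {η} - H (p i) < Γ i}) :
    ∀ i, IsCycleSet G H (V i) := by
  intro i
  classical
  set Others : Set Ω := {x | ∃ j, j ≠ i ∧ x ∈ P j} with hOthers
  set T : ℝ := commHeightSet G H (P i) Others with hT
  set Φ : Ω → ℝ := fun η => commHeightSet G H (P i) {η} with hΦ
  -- membership in V i
  have hVm : ∀ η, η ∈ V i ↔ Φ η < T := by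
    intro η
    rw [hV i]
    simp only [Set.mem_setOf_eq, hΓ i]
    constructor <;> intro h <;> linarith
  -- disjointness
  have hdisj : ∀ j, j ≠ i → ∀ x, x ∈ P i → x ∈ P j → False := by
    intro j hj x hxi hxj
    exact hj (hPinj (plateau_eq_of_inter (hP j) (hP i) ⟨x, hxj, hxi⟩))
  -- a plateau index distinct from i
  have hj : ∃ j : Fin ν, j ≠ i := by
    rcases eq_or_ne i ⟨0, by omega⟩ with h | h
    · refine ⟨⟨1, by omega⟩, ?_⟩
      rw [h]
      intro hc
      have := congrArg Fin.val hc
      simp at this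
    · exact ⟨⟨0, by omega⟩, fun hc => h hc.symm⟩
  obtain ⟨j, hji⟩ := hj
  have hpjO : p j ∈ Others := ⟨j, hji, hp j⟩
  have hOne : Others.Nonempty := ⟨p j, hpjO⟩
  obtain ⟨hPine, hPic, hPiconst, hPibd⟩ := hP i
  -- constancy: H a = H (p i) for a in P i
  have hconst : ∀ a ∈ P i, H a = H (p i) := fun a ha => hPiconst a ha (p i) (hp i)
  -- Γ positivity: H (p i) < T
  have hΓpos : H (p i) < T := by
    obtain ⟨a, ha, b, hb, hab⟩ := exists_commHeightSet hG hPine hOne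
    obtain ⟨w, hw⟩ := exists_walk_commHeight (H := H) (hG.preconnected a b)
    obtain ⟨k, hki, hbk⟩ := hb
    have hbni : b ∉ P i := fun hbi => hdisj k hki b hbi hbk
    obtain ⟨ξ, hξs, hξb⟩ := exists_boundary_mem w ha hbni
    calc H (p i) = H a := (hconst a ha).symm
      _ < H ξ := hPibd a ha ξ hξb
      _ ≤ walkHeight H w := le_walkHeight w hξs
      _ = commHeight G H a b := hw
      _ = T := hab
  -- Φ on P i equals H (p i)
  have hΦPi : ∀ a ∈ P i, Φ a = H (p i) := by
    intro a ha
    have h1 : Φ a ≤ H (p i) := by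
      have := commHeightSet_le hG (H := H) ha (Set.mem_singleton a)
      rw [commHeight_self] at this
      exact this.trans_eq (hconst a ha)
    have h2 : H (p i) ≤ Φ a := by
      obtain ⟨a', ha', b, hb, hab⟩ := exists_commHeightSet hG (H := H) hPine
        (Set.singleton_nonempty a)
      calc H (p i) = H a' := (hconst a' ha').symm
        _ ≤ commHeight G H a' b := le_commHeight_left (hG.preconnected a' b)
        _ = Φ a := hab
    exact le_antisymm h1 h2
  -- H η ≤ Φ η
  have hΦge : ∀ η, H η ≤ Φ η := by
    intro η
    obtain ⟨a, ha, b, hb, hab⟩ := exists_commHeightSet hG (H := H) hPine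
      (Set.singleton_nonempty η)
    obtain rfl : b = η := hb
    calc H b ≤ commHeight G H a b := le_commHeight_right (hG.preconnected a b)
      _ = Φ b := hab
  -- P i ⊆ V i
  have hPiV : P i ⊆ V i := fun a ha => (hVm a).mpr ((hΦPi a ha).symm ▸ hΓpos)
  -- Φ of any point on a low walk from P i is small
  have hwalkV : ∀ {a η : Ω} (w : G.Walk a η), a ∈ P i → walkHeight H w < T →
      ∀ x ∈ w.support, x ∈ V i := by
    intro a η w ha hw x hx
    refine (hVm x).mpr ?_
    calc Φ x ≤ commHeight G H a x := commHeightSet_le hG ha (Set.mem_singleton x)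
      _ ≤ walkHeight H (w.takeUntil x hx) := commHeight_le _
      _ ≤ walkHeight H w :=
          walkHeight_le _ (fun z hz => le_walkHeight w (w.support_takeUntil_subset hx hz))
      _ < T := hw
  -- walks realizing Φ
  have hΦwalk : ∀ η, ∃ a ∈ P i, ∃ w : G.Walk a η, walkHeight H w = Φ η := by
    intro η
    obtain ⟨a, ha, b, hb, hab⟩ := exists_commHeightSet hG (H := H) hPine
      (Set.singleton_nonempty η)
    rcases hb with rfl
    obtain ⟨w, hw⟩ := exists_walk_commHeight (H := H) (hG.preconnected a b)
    exact ⟨a, ha, w, hw.trans hab⟩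
  refine ⟨⟨p i, hPiV (hp i)⟩, ?_, ?_, ?_⟩
  · -- connectedness
    have hreach : ∀ η (hη : η ∈ V i),
        (G.induce (V i)).Reachable ⟨η, hη⟩ ⟨p i, hPiV (hp i)⟩ := by
      intro η hη
      obtain ⟨a, ha, w, hw⟩ := hΦwalk η
      have hlow : walkHeight H w < T := hw ▸ (hVm η).mp hη
      have hsup : ∀ x ∈ w.support, x ∈ V i := hwalkV w ha hlow
      have r1 : (G.induce (V i)).Reachable ⟨a, hsup a w.start_mem_support⟩
          ⟨η, hsup η w.end_mem_support⟩ := reachable_induce w hsup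
      -- reach a from p i inside P i ⊆ V i
      obtain ⟨wi⟩ := hPic.preconnected ⟨p i, hp i⟩ ⟨a, ha⟩
      obtain ⟨w', hw'⟩ := walk_of_induce wi
      have hsup' : ∀ z ∈ w'.support, z ∈ V i := fun z hz => hPiV (hw' z hz)
      have r2 : (G.induce (V i)).Reachable ⟨p i, hsup' _ w'.start_mem_support⟩
          ⟨a, hsup' _ w'.end_mem_support⟩ := reachable_induce w' hsup'
      exact r1.symm.trans (r2.symm)
    haveI : Nonempty ↑(V i) := ⟨⟨p i, hPiV (hp i)⟩⟩
    exact Connected.mk (fun x y => (hreach x x.2).trans (hreach y y.2).symm)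
  · -- properness
    intro huniv
    have hpjV : p j ∈ V i := huniv ▸ Set.mem_univ (p j)
    have h1 : Φ (p j) < T := (hVm _).mp hpjV
    obtain ⟨a, ha, w, hw⟩ := hΦwalk (p j)
    have h2 : T ≤ Φ (p j) := by
      calc T ≤ commHeight G H a (p j) := commHeightSet_le hG ha hpjO
        _ ≤ walkHeight H w := commHeight_le w
        _ = Φ (p j) := hw
    exact absurd h1 (not_lt.mpr h2)
  · -- boundary
    intro η hη ξ hξ
    obtain ⟨hξn, η', hη', hadj⟩ := hξ
    have hΦξ : T ≤ Φ ξ := not_lt.mp (fun hc => hξn ((hVm ξ).mpr hc))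
    have hΦη' : Φ η' < T := (hVm η').mp hη'
    obtain ⟨a, ha, w, hw⟩ := hΦwalk η'
    have hcon : Φ ξ ≤ max (Φ η') (H ξ) := by
      calc Φ ξ ≤ commHeight G H a ξ := commHeightSet_le hG ha (Set.mem_singleton ξ)
        _ ≤ walkHeight H (w.concat hadj.symm) := commHeight_le _
        _ ≤ max (Φ η') (H ξ) := by
            refine walkHeight_le _ (fun x hx => ?_)
            rw [Walk.support_concat] at hx
            rcases List.mem_append.mp hx with hx | hx
            · exact le_max_of_le_left (hw ▸ le_walkHeight w hx)
            · rcases List.mem_singleton.mp hx with rfl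
              exact le_max_right _ _
    have hTξ : T ≤ H ξ := by
      rcases max_cases (Φ η') (H ξ) with ⟨hm, _⟩ | ⟨hm, _⟩
      · exact absurd (hΦξ.trans (hcon.trans_eq hm)) (not_le.mpr hΦη')
      · exact hΦξ.trans (hcon.trans_eq hm)
    calc H η ≤ Φ η := hΦge η
      _ < T := (hVm η).mp hη
      _ ≤ H ξ := hTξ
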